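/- Let φ: N₄ → G be a group homomorphism into a group G such that φ(c) is a nontrivial element of infinite order. Then φ is injective. -/

import Mathlib

/-- A 4×4 integer matrix is lower unitriangular if it has `1`s on the diagonal
and `0`s above the diagonal. -/
def IsUnitriLower (M : Matrix (Fin 4) (Fin 4) ℤ) : Prop :=
  (∀ i, M i i = 1) ∧ ∀ i j : Fin 4, i < j → M i j = 0

/-- `N₄`: the group of 4×4 lower triangular integer matrices with `1`s on the diagonal,
realized as a subgroup of the units of the matrix ring. -/
def N4 : Subgroup (Matrix (Fin 4) (Fin 4) ℤ)ˣ where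
  carrier := {u | IsUnitriLower u.val}
  one_mem' := by
    refine ⟨fun i => ?_, fun i j hij => ?_⟩
    · simp [Matrix.one_apply_eq]
    · simp [Units.val_one, Matrix.one_apply_ne (ne_of_lt hij)]
  mul_mem' := by
    rintro a b ⟨ha1, ha2⟩ ⟨hb1, hb2⟩
    refine ⟨fun i => ?_, fun i j hij => ?_⟩
    · have key : ∀ k : Fin 4, a.val i k * b.val k i = if k = i then 1 else 0 := by
        intro k
        rcases lt_trichotomy k i with h | h | h
        · rw [hb2 k i h, mul_zero, if_neg h.ne]
        · subst h
          rw [ha1, hb1, one_mul, if_pos rfl]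
        · rw [ha2 i k h, zero_mul, if_neg h.ne']
      show (a.val * b.val) i i = 1
      rw [Matrix.mul_apply]
      simp [key]
    · show (a.val * b.val) i j = 0
      rw [Matrix.mul_apply]
      refine Finset.sum_eq_zero fun k _ => ?_
      rcases lt_or_ge i k with h | h
      · rw [ha2 i k h, zero_mul]
      · rw [hb2 k j (lt_of_le_of_lt h hij), mul_zero]
  inv_mem' := by
    rintro x ⟨ha1, ha2⟩
    set A := x.val with hA
    set B := (x⁻¹).val with hB
    have hBA : B * A = 1 := by
      rw [hB, hA, ← Units.val_mul]
      simp
    have key : ∀ i j : Fin 4,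
        B i 0 * A 0 j + B i 1 * A 1 j + B i 2 * A 2 j + B i 3 * A 3 j
          = if i = j then 1 else 0 := by
      intro i j
      have h : (B * A) i j = (1 : Matrix (Fin 4) (Fin 4) ℤ) i j := by rw [hBA]
      rw [Matrix.mul_apply, Fin.sum_univ_four] at h
      rw [h, Matrix.one_apply]
    have b03 : B 0 3 = 0 := by
      have h := key 0 3
      rw [ha2 0 3 (by decide), ha2 1 3 (by decide), ha2 2 3 (by decide), ha1 3,
        if_neg (by decide)] at h
      simpa using h
    have b13 : B 1 3 = 0 := by
      have h := key 1 3
      rw [ha2 0 3 (by decide), ha2 1 3 (by decide), ha2 2 3 (by decide), ha1 3,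
        if_neg (by decide)] at h
      simpa using h
    have b23 : B 2 3 = 0 := by
      have h := key 2 3
      rw [ha2 0 3 (by decide), ha2 1 3 (by decide), ha2 2 3 (by decide), ha1 3,
        if_neg (by decide)] at h
      simpa using h
    have b33 : B 3 3 = 1 := by
      have h := key 3 3
      rw [ha2 0 3 (by decide), ha2 1 3 (by decide), ha2 2 3 (by decide), ha1 3,
        if_pos rfl] at h
      simpa using h
    have b02 : B 0 2 = 0 := by
      have h := key 0 2
      rw [ha2 0 2 (by decide), ha2 1 2 (by decide), ha1 2, b03, if_neg (by decide)] at h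
      simpa using h
    have b12 : B 1 2 = 0 := by
      have h := key 1 2
      rw [ha2 0 2 (by decide), ha2 1 2 (by decide), ha1 2, b13, if_neg (by decide)] at h
      simpa using h
    have b22 : B 2 2 = 1 := by
      have h := key 2 2
      rw [ha2 0 2 (by decide), ha2 1 2 (by decide), ha1 2, b23, if_pos rfl] at h
      simpa using h
    have b01 : B 0 1 = 0 := by
      have h := key 0 1
      rw [ha2 0 1 (by decide), ha1 1, b02, b03, if_neg (by decide)] at h
      simpa using h
    have b11 : B 1 1 = 1 := by
      have h := key 1 1
      rw [ha2 0 1 (by decide), ha1 1, b12, b13, if_pos rfl] at h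
      simpa using h
    have b00 : B 0 0 = 1 := by
      have h := key 0 0
      rw [ha1 0, b01, b02, b03, if_pos rfl] at h
      simpa using h
    refine ⟨fun i => ?_, fun i j hij => ?_⟩
    · fin_cases i
      · exact b00
      · exact b11
      · exact b22
      · exact b33
    · fin_cases i <;> fin_cases j <;>
        first
          | exact absurd hij (by decide)
          | exact b01
          | exact b02
          | exact b03
          | exact b12
          | exact b13
          | exact b23

/-- Helper to build elements of `N4` from a matrix, an explicit inverse, and proofs. -/
def mkN4 (M N : Matrix (Fin 4) (Fin 4) ℤ) (h1 : M * N = 1) (h2 : N * M = 1)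
    (h : IsUnitriLower M) : N4 :=
  ⟨⟨M, N, h1, h2⟩, h⟩

/-- The generator `e` of `N₄`: entry `1` in position (2,1). -/
def e4 : N4 :=
  mkN4 !![1,0,0,0; 1,1,0,0; 0,0,1,0; 0,0,0,1] !![1,0,0,0; -1,1,0,0; 0,0,1,0; 0,0,0,1]
    (by decide) (by decide)
    (by
      refine ⟨by decide, fun i j hij => ?_⟩
      fin_cases i <;> fin_cases j <;> first | exact absurd hij (by decide) | rfl)

/-- The generator `f` of `N₄`: entry `1` in position (3,2). -/
def f4 : N4 :=
  mkN4 !![1,0,0,0; 0,1,0,0; 0,1,1,0; 0,0,0,1] !![1,0,0,0; 0,1,0,0; 0,-1,1,0; 0,0,0,1]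
    (by decide) (by decide)
    (by
      refine ⟨by decide, fun i j hij => ?_⟩
      fin_cases i <;> fin_cases j <;> first | exact absurd hij (by decide) | rfl)

/-- The generator `d` of `N₄`: entry `1` in position (4,3). -/
def d4 : N4 :=
  mkN4 !![1,0,0,0; 0,1,0,0; 0,0,1,0; 0,0,1,1] !![1,0,0,0; 0,1,0,0; 0,0,1,0; 0,0,-1,1]
    (by decide) (by decide)
    (by
      refine ⟨by decide, fun i j hij => ?_⟩
      fin_cases i <;> fin_cases j <;> first | exact absurd hij (by decide) | rfl)

/-- The generator `a` of `N₄`: entry `1` in position (3,1). -/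
def a4 : N4 :=
  mkN4 !![1,0,0,0; 0,1,0,0; 1,0,1,0; 0,0,0,1] !![1,0,0,0; 0,1,0,0; -1,0,1,0; 0,0,0,1]
    (by decide) (by decide)
    (by
      refine ⟨by decide, fun i j hij => ?_⟩
      fin_cases i <;> fin_cases j <;> first | exact absurd hij (by decide) | rfl)

/-- The generator `b` of `N₄`: entry `1` in position (4,2). -/
def b4 : N4 :=
  mkN4 !![1,0,0,0; 0,1,0,0; 0,0,1,0; 0,1,0,1] !![1,0,0,0; 0,1,0,0; 0,0,1,0; 0,-1,0,1]
    (by decide) (by decide)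
    (by
      refine ⟨by decide, fun i j hij => ?_⟩
      fin_cases i <;> fin_cases j <;> first | exact absurd hij (by decide) | rfl)

/-- The generator `c` of `N₄`: entry `1` in position (4,1). -/
def c4 : N4 :=
  mkN4 !![1,0,0,0; 0,1,0,0; 0,0,1,0; 1,0,0,1] !![1,0,0,0; 0,1,0,0; 0,0,1,0; -1,0,0,1]
    (by decide) (by decide)
    (by
      refine ⟨by decide, fun i j hij => ?_⟩
      fin_cases i <;> fin_cases j <;> first | exact absurd hij (by decide) | rfl)

/-- matrix of `c4 ^ n` -/
def cm (n : ℤ) : Matrix (Fin 4) (Fin 4) ℤ := !![1,0,0,0; 0,1,0,0; 0,0,1,0; n,0,0,1]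

lemma cm_mul (m n : ℤ) : cm m * cm n = cm (m + n) := by
  ext i j
  fin_cases i <;> fin_cases j <;> simp [cm, Matrix.mul_apply, Fin.sum_univ_four]

lemma isUnitriLower_cm (n : ℤ) : IsUnitriLower (cm n) := by
  constructor
  · intro i; fin_cases i <;> simp [cm]
  · intro i j hij; fin_cases i <;> fin_cases j <;> simp_all [cm] <;> exact absurd hij (by decide)

/-- `c4 ^ n` as an explicit element of N4 -/
def czel (n : ℤ) : N4 :=
  mkN4 (cm n) (cm (-n))
    (by rw [cm_mul]; simp [cm]; ext i j; fin_cases i <;> fin_cases j <;> simp [Matrix.one_apply, Matrix.vecHead, Matrix.vecTail])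
    (by rw [cm_mul]; simp [cm]; ext i j; fin_cases i <;> fin_cases j <;> simp [Matrix.one_apply, Matrix.vecHead, Matrix.vecTail])
    (isUnitriLower_cm n)

lemma N4_ext {p q : N4} (h : (p : (Matrix (Fin 4) (Fin 4) ℤ)ˣ).val = (q : (Matrix (Fin 4) (Fin 4) ℤ)ˣ).val) : p = q :=
  Subtype.ext (Units.ext h)

lemma czel_eq_zpow (n : ℤ) : czel n = c4 ^ n := by
  induction n using Int.induction_on with
  | zero => apply N4_ext; simp [czel, mkN4, cm]; ext i j; fin_cases i <;> fin_cases j <;> simp [Matrix.one_apply, Matrix.vecHead, Matrix.vecTail]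
  | succ n ih =>
    rw [zpow_add_one, ← ih]
    apply N4_ext
    show cm (n + 1) = cm n * (c4 : (Matrix (Fin 4) (Fin 4) ℤ)ˣ).val
    show cm (n+1) = cm n * cm 1
    rw [cm_mul]
  | pred n ih =>
    rw [zpow_sub_one, ← ih]
    have : czel (-n - 1) * c4 = czel (-n) := by
      apply N4_ext
      show cm (-n - 1) * cm 1 = cm (-n)
      rw [cm_mul]; ring_nf
    rw [← this]
    simp [mul_assoc]

open scoped commutatorElement

lemma comm_of_mul_eq {g u v : N4} (h : g * u = v * (u * g)) : ⁅g, u⁆ = v := by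
  have hv : v = g * u * (u * g)⁻¹ := by rw [h, mul_inv_cancel_right]
  rw [hv, commutatorElement_def, mul_inv_rev, mul_assoc]

/-- matrix of a "middle" element with entries p at (2,0) and r at (3,0) -/
def mm (p r : ℤ) : Matrix (Fin 4) (Fin 4) ℤ := !![1,0,0,0; 0,1,0,0; p,0,1,0; r,0,0,1]

def mid (p r : ℤ) : N4 :=
  mkN4 (mm p r) (mm (-p) (-r))
    (by ext i j; fin_cases i <;> fin_cases j <;>
        simp [mm, Matrix.mul_apply, Fin.sum_univ_four, Matrix.one_apply, Matrix.vecHead, Matrix.vecTail])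
    (by ext i j; fin_cases i <;> fin_cases j <;>
        simp [mm, Matrix.mul_apply, Fin.sum_univ_four, Matrix.one_apply, Matrix.vecHead, Matrix.vecTail])
    (by constructor
        · intro i; fin_cases i <;> simp [mm]
        · intro i j hij; fin_cases i <;> fin_cases j <;> simp_all [mm])


lemma repr_exists (g : N4) : ∃ x10 x20 x21 x30 x31 x32 : ℤ,
    (g : (Matrix (Fin 4) (Fin 4) ℤ)ˣ).val =
      !![1,0,0,0; x10,1,0,0; x20,x21,1,0; x30,x31,x32,1] := by
  obtain ⟨hd1, hd2⟩ := g.2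
  set A := (g : (Matrix (Fin 4) (Fin 4) ℤ)ˣ).val with hA
  refine ⟨A 1 0, A 2 0, A 2 1, A 3 0, A 3 1, A 3 2, ?_⟩
  ext i j
  fin_cases i <;> fin_cases j <;>
    simp [Matrix.vecHead, Matrix.vecTail] <;>
    first | exact hd1 _ | exact hd2 _ _ (by decide)


set_option maxHeartbeats 2000000 in
/-- **Lemma 1.1.** If `φ : N₄ → G` is a group homomorphism such that `φ(c)` is a
nontrivial element of infinite order, then `φ` is injective. -/
theorem N4_hom_injective_of_c_infinite_order {G : Type*} [Group G] (φ : N4 →* G)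
    (hne : φ c4 ≠ 1) (hord : ¬ IsOfFinOrder (φ c4)) :
    Function.Injective φ := by
  have key : ∀ (n : ℤ) (k : N4), φ k = 1 →
      (k : (Matrix (Fin 4) (Fin 4) ℤ)ˣ).val = cm n → n = 0 := by
    intro n k hk hval
    by_contra hn
    have hkc : k = c4 ^ n := by rw [← czel_eq_zpow]; exact N4_ext hval
    rw [hkc, map_zpow] at hk
    apply hord
    refine isOfFinOrder_iff_pow_eq_one.mpr ⟨n.natAbs, Int.natAbs_pos.mpr hn, ?_⟩
    rcases Int.natAbs_eq n with h | h
    · rw [← zpow_natCast, ← h, hk]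
    · rw [← zpow_natCast, ← neg_neg ((n.natAbs : ℤ)), ← h, zpow_neg, hk, inv_one]
  rw [injective_iff_map_eq_one]
  intro g hg
  have kerc : ∀ (k h : N4), φ k = 1 → φ ⁅k, h⁆ = 1 := by
    intro k h hk
    simp [commutatorElement_def, map_mul, map_inv, hk]
  obtain ⟨x10, x20, x21, x30, x31, x32, hrepr⟩ := repr_exists g
  -- step 1 : x10 = 0
  have hcb : ⁅g, b4⁆ = czel (-x10) := by
    apply comm_of_mul_eq; apply N4_ext
    show (g : (Matrix (Fin 4) (Fin 4) ℤ)ˣ).val * !![1,0,0,0; 0,1,0,0; 0,0,1,0; 0,1,0,1]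
       = cm (-x10) * (!![1,0,0,0; 0,1,0,0; 0,0,1,0; 0,1,0,1] * (g : (Matrix (Fin 4) (Fin 4) ℤ)ˣ).val)
    rw [hrepr]
    ext i j
    fin_cases i <;> fin_cases j <;>
      simp [cm, Matrix.mul_apply, Fin.sum_univ_four, Matrix.vecHead, Matrix.vecTail] <;> ring
  have h10 : x10 = 0 := by
    have := key (-x10) _ (kerc g b4 hg) (by rw [hcb]; rfl)
    omega
  -- step 2 : x32 = 0
  have hca : ⁅g, a4⁆ = czel x32 := by
    apply comm_of_mul_eq; apply N4_ext
    show (g : (Matrix (Fin 4) (Fin 4) ℤ)ˣ).val * !![1,0,0,0; 0,1,0,0; 1,0,1,0; 0,0,0,1]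
       = cm x32 * (!![1,0,0,0; 0,1,0,0; 1,0,1,0; 0,0,0,1] * (g : (Matrix (Fin 4) (Fin 4) ℤ)ˣ).val)
    rw [hrepr]
    ext i j
    fin_cases i <;> fin_cases j <;>
      simp [cm, Matrix.mul_apply, Fin.sum_univ_four, Matrix.vecHead, Matrix.vecTail] <;> ring
  have h32 : x32 = 0 := key x32 _ (kerc g a4 hg) (by rw [hca]; rfl)
  -- step 3 : commutator with e4
  have hce : ⁅g, e4⁆ = mid x21 x31 := by
    apply comm_of_mul_eq; apply N4_ext
    show (g : (Matrix (Fin 4) (Fin 4) ℤ)ˣ).val * !![1,0,0,0; 1,1,0,0; 0,0,1,0; 0,0,0,1]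
       = mm x21 x31 * (!![1,0,0,0; 1,1,0,0; 0,0,1,0; 0,0,0,1] * (g : (Matrix (Fin 4) (Fin 4) ℤ)ˣ).val)
    rw [hrepr]
    ext i j
    fin_cases i <;> fin_cases j <;>
      simp [mm, Matrix.mul_apply, Fin.sum_univ_four, Matrix.vecHead, Matrix.vecTail] <;> ring
  have hmid : φ (mid x21 x31) = 1 := by rw [← hce]; exact kerc g e4 hg
  -- step 4 : x21 = 0
  have hcd2 : ⁅mid x21 x31, d4⁆ = czel (-x21) := by
    apply comm_of_mul_eq; apply N4_ext
    show mm x21 x31 * !![1,0,0,0; 0,1,0,0; 0,0,1,0; 0,0,1,1]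
       = cm (-x21) * (!![1,0,0,0; 0,1,0,0; 0,0,1,0; 0,0,1,1] * mm x21 x31)
    ext i j
    fin_cases i <;> fin_cases j <;>
      simp [cm, mm, Matrix.mul_apply, Fin.sum_univ_four, Matrix.vecHead, Matrix.vecTail] <;> ring
  have h21 : x21 = 0 := by
    have := key (-x21) _ (kerc (mid x21 x31) d4 hmid) (by rw [hcd2]; rfl)
    omega
  -- step 5 : x31 = 0
  have h31 : x31 = 0 := by
    refine key x31 (mid x21 x31) hmid ?_
    show mm x21 x31 = cm x31
    subst h21
    ext i j
    fin_cases i <;> fin_cases j <;> simp [cm, mm, Matrix.vecHead, Matrix.vecTail]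
  -- step 6 : x20 = 0
  subst h10 h21
  have hcd : ⁅g, d4⁆ = czel (-x20) := by
    apply comm_of_mul_eq; apply N4_ext
    show (g : (Matrix (Fin 4) (Fin 4) ℤ)ˣ).val * !![1,0,0,0; 0,1,0,0; 0,0,1,0; 0,0,1,1]
       = cm (-x20) * (!![1,0,0,0; 0,1,0,0; 0,0,1,0; 0,0,1,1] * (g : (Matrix (Fin 4) (Fin 4) ℤ)ˣ).val)
    rw [hrepr]
    ext i j
    fin_cases i <;> fin_cases j <;>
      simp [cm, Matrix.mul_apply, Fin.sum_univ_four, Matrix.vecHead, Matrix.vecTail] <;> ring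
  have h20 : x20 = 0 := by
    have := key (-x20) _ (kerc g d4 hg) (by rw [hcd]; rfl)
    omega
  -- step 7 : x30 = 0 and conclude
  subst h20 h31 h32
  have h30 : x30 = 0 := by
    refine key x30 g hg ?_
    rw [hrepr]
    ext i j
    fin_cases i <;> fin_cases j <;> simp [cm, Matrix.vecHead, Matrix.vecTail]
  subst h30
  have : g = czel 0 := by
    apply N4_ext
    rw [hrepr]
    show _ = cm 0
    ext i j
    fin_cases i <;> fin_cases j <;> simp [cm, Matrix.vecHead, Matrix.vecTail]
  rw [this, czel_eq_zpow, zpow_zero]
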